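/- In the ring A_1 generated over K̄_c by τ and d with relations dτ - τd = [1]^{1/q}, τλ = λ^q τ, dλ = λ^{1/q} d (λ ∈ K̄_c), every element can be uniquely written as a finite sum Σ λ_{ij} τ^i d^j; moreover A_1 has no zero divisors. -/

import Mathlib

open Finsupp

namespace WC

variable {L : Type} [Field L] (σ : L ≃+* L) (y : L)

local notation "V" => ((ℕ × ℕ) →₀ L)

@[simp] lemma end_mul_apply (f g : AddMonoid.End ((ℕ × ℕ) →₀ L)) (v : (ℕ × ℕ) →₀ L) :
    (f * g) v = f (g v) := rfl

/-- the additive hom underlying σ -/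
def sh : L →+ L := AddMonoidHom.mk' σ (map_add σ)

noncomputable def cc : ℕ → L
  | 0 => 0
  | n+1 => σ (cc n) + y

noncomputable def Iot : L →+* AddMonoid.End V := Module.toAddMonoidEnd L V

noncomputable def Top : AddMonoid.End V :=
  Finsupp.liftAddHom fun ij => (Finsupp.singleAddHom (ij.1+1, ij.2)).comp (sh σ)

noncomputable def Dow : AddMonoid.End V :=
  Finsupp.liftAddHom fun ij =>
    (Finsupp.singleAddHom (ij.1, ij.2+1)).comp (sh σ.symm)
    + (Finsupp.singleAddHom (ij.1 - 1, ij.2)).comp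
        ((AddMonoidHom.mulLeft (cc σ y ij.1)).comp (sh σ.symm))

@[simp] lemma Iot_single (l : L) (ij : ℕ × ℕ) (b : L) :
    Iot (L := L) l (single ij b) = single ij (l * b) := by
  show l • single ij b = _
  simp [smul_single]

@[simp] lemma Top_single (i j : ℕ) (b : L) :
    Top σ (single (i, j) b) = single (i+1, j) (σ b) := by
  rw [Top]; erw [Finsupp.liftAddHom_apply_single]; rfl

@[simp] lemma Dow_single (i j : ℕ) (b : L) :
    Dow σ y (single (i, j) b)
      = single (i, j+1) (σ.symm b) + single (i-1, j) (cc σ y i * σ.symm b) := by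
  rw [Dow]; erw [Finsupp.liftAddHom_apply_single]; rfl

end WC

namespace WC
variable {L : Type} [Field L] (σ : L ≃+* L) (y : L)

lemma end_ext {f g : AddMonoid.End ((ℕ × ℕ) →₀ L)}
    (h : ∀ i j b, f (single (i, j) b) = g (single (i, j) b)) : f = g := by
  refine Finsupp.addHom_ext fun ij b => ?_
  obtain ⟨i, j⟩ := ij; exact h i j b

lemma R1 (l : L) : Top σ * Iot l = Iot (σ l) * Top σ := by
  refine end_ext fun i j b => ?_
  simp [map_mul, -Finsupp.single_mul]

lemma R2 (l : L) : Dow σ y * Iot l = Iot (σ.symm l) * Dow σ y := by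
  refine end_ext fun i j b => ?_
  simp [map_mul, mul_add, smul_single, -Finsupp.single_mul]
  ring_nf

lemma R3 : Dow σ y * Top σ = Top σ * Dow σ y + Iot y := by
  refine end_ext fun i j b => ?_
  have h0 : (Dow σ y * Top σ) (single (i,j) b)
      = single (i+1, j+1) b + single (i, j) (cc σ y (i+1) * b) := by
    simp [cc, -Finsupp.single_mul]
  have h1 : (Top σ * Dow σ y) (single (i,j) b)
      = single (i+1, j+1) b + single (i-1+1, j) (σ (cc σ y i) * b) := by
    simp [map_mul, -Finsupp.single_mul]
  rw [h0]
  show _ = (Top σ * Dow σ y) (single (i,j) b) + Iot y (single (i,j) b)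
  rw [h1, Iot_single]
  cases i with
  | zero => simp [cc, -Finsupp.single_mul]
  | succ i => simp [cc, add_mul, add_assoc]

end WC

namespace WC
variable {L : Type} [Field L] (σ : L ≃+* L) (y : L)

lemma Tpow_Iot (n : ℕ) (l : L) :
    Top σ ^ n * Iot l = Iot ((⇑σ)^[n] l) * Top σ ^ n := by
  induction n generalizing l with
  | zero => simp
  | succ n ih =>
    rw [pow_succ, mul_assoc, R1, ← mul_assoc, ih (σ l), Function.iterate_succ_apply,
      mul_assoc]

lemma Dpow_Iot (n : ℕ) (l : L) :
    Dow σ y ^ n * Iot l = Iot ((⇑σ.symm)^[n] l) * Dow σ y ^ n := by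
  induction n generalizing l with
  | zero => simp
  | succ n ih =>
    rw [pow_succ, mul_assoc, R2, ← mul_assoc, ih (σ.symm l), Function.iterate_succ_apply,
      mul_assoc]

lemma DTpow (k : ℕ) :
    Dow σ y * Top σ ^ (k+1)
      = Top σ ^ (k+1) * Dow σ y + Iot (cc σ y (k+1)) * Top σ ^ k := by
  induction k with
  | zero => simp [R3, cc]
  | succ k ih =>
    rw [pow_succ' (Top σ) (k+1), ← mul_assoc, R3, add_mul, mul_assoc, ih]
    rw [mul_add, ← mul_assoc, ← mul_assoc, R1, show cc σ y (k+2) = σ (cc σ y (k+1)) + y from rfl,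
      map_add (Iot (L := L)), add_mul, ← pow_succ' (Top σ) (k+1)]
    rw [mul_assoc (Iot (σ (cc σ y (k+1)))), ← pow_succ' (Top σ) k]
    abel

end WC

namespace WC
variable {L : Type} [Field L] (σ : L ≃+* L) (y : L)

lemma Tpow_single (n i j : ℕ) (b : L) :
    (Top σ ^ n) (single (i, j) b) = single (i + n, j) ((⇑σ)^[n] b) := by
  induction n generalizing i b with
  | zero => simp
  | succ n ih =>
    rw [pow_succ', end_mul_apply, ih, Top_single, Function.iterate_succ_apply' (⇑σ) n b, Nat.add_assoc]

lemma Dpow_single_zero (n j : ℕ) (b : L) :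
    (Dow σ y ^ n) (single (0, j) b) = single (0, j + n) ((⇑σ.symm)^[n] b) := by
  induction n generalizing j b with
  | zero => simp
  | succ n ih =>
    rw [pow_succ', end_mul_apply, ih, Dow_single, cc, zero_mul, single_zero, add_zero,
      Function.iterate_succ_apply' (⇑σ.symm) n b, Nat.add_assoc]

noncomputable def Phi : ((ℕ × ℕ) →₀ L) →+ AddMonoid.End ((ℕ × ℕ) →₀ L) :=
  Finsupp.liftAddHom fun ij =>
    (AddMonoidHom.mulRight (Top σ ^ ij.1 * Dow σ y ^ ij.2)).comp (Iot (L := L)).toAddMonoidHom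

lemma Phi_single (ij : ℕ × ℕ) (l : L) :
    Phi σ y (single ij l) = Iot l * Top σ ^ ij.1 * Dow σ y ^ ij.2 := by
  rw [Phi, Finsupp.liftAddHom_apply_single]
  show Iot l * (Top σ ^ ij.1 * Dow σ y ^ ij.2) = _
  rw [mul_assoc]

lemma Phi_apply (f : (ℕ × ℕ) →₀ L) :
    Phi σ y f = f.sum fun ij l => Iot l * Top σ ^ ij.1 * Dow σ y ^ ij.2 := by
  rw [Phi, Finsupp.liftAddHom_apply]
  refine Finsupp.sum_congr fun ij _ => ?_
  show Iot (f ij) * (Top σ ^ ij.1 * Dow σ y ^ ij.2) = _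
  rw [mul_assoc]

lemma mono_eval_base (i j : ℕ) (l : L) :
    (Iot l * Top σ ^ i * Dow σ y ^ j) (single ((0:ℕ), (0:ℕ)) (1:L)) = single (i, j) l := by
  rw [mul_assoc, end_mul_apply, end_mul_apply, Dpow_single_zero, Tpow_single]
  have h1 : (⇑σ.symm)^[j] (1:L) = 1 := by
    induction j with
    | zero => rfl
    | succ n ih => rw [Function.iterate_succ_apply', ih, map_one]
  have h2 : (⇑σ)^[i] (1:L) = 1 := by
    induction i with
    | zero => rfl
    | succ n ih => rw [Function.iterate_succ_apply', ih, map_one]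
  rw [h1, h2, Iot_single, mul_one]
  simp

lemma Phi_eval_base (f : (ℕ × ℕ) →₀ L) :
    Phi σ y f (single ((0:ℕ), (0:ℕ)) (1:L)) = f := by
  rw [Phi_apply, Finsupp.sum]; erw [AddMonoidHom.finset_sum_apply]
  erw [Finset.sum_congr rfl fun ij _ => mono_eval_base σ y ij.1 ij.2 (f ij)]
  exact Finsupp.sum_single f

lemma Phi_injective : Function.Injective (Phi σ y) := fun f g h => by
  rw [← Phi_eval_base σ y f, ← Phi_eval_base σ y g, h]

end WC

namespace WC
variable {L : Type} [Field L] (σ : L ≃+* L) (y : L)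

lemma mono_frame (l b : L) (i m a1 a2 : ℕ) :
    Iot l * Top σ ^ i * (Iot b * Top σ ^ a1 * Dow σ y ^ a2) * Dow σ y ^ m
      = Phi σ y (single (i + a1, a2 + m) (l * (⇑σ)^[i] b)) := by
  rw [Phi_single]
  simp only [mul_assoc]
  rw [← mul_assoc (Top σ ^ i) (Iot b), Tpow_Iot]
  simp only [mul_assoc]
  rw [← mul_assoc (Iot l), ← map_mul, ← pow_add (Dow σ y), ← mul_assoc (Top σ ^ i), ← pow_add]

lemma frame_mem (l : L) (i m : ℕ) (f : (ℕ × ℕ) →₀ L) :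
    ∃ g, Iot l * Top σ ^ i * Phi σ y f * Dow σ y ^ m = Phi σ y g := by
  induction f using Finsupp.induction with
  | zero => exact ⟨0, by simp⟩
  | single_add a b f _ _ ih =>
    obtain ⟨g, hg⟩ := ih
    refine ⟨single (i + a.1, a.2 + m) (l * (⇑σ)^[i] b) + g, ?_⟩
    rw [map_add, map_add, mul_add, add_mul, hg, ← mono_frame σ y l b i m a.1 a.2, Phi_single]

lemma Dmul_mem (f : (ℕ × ℕ) →₀ L) :
    ∃ g, Dow σ y * Phi σ y f = Phi σ y g := by
  induction f using Finsupp.induction with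
  | zero => exact ⟨0, by simp⟩
  | single_add a b f _ _ ih =>
    obtain ⟨g, hg⟩ := ih
    obtain ⟨k, m⟩ := a
    have key : ∃ g', Dow σ y * Phi σ y (single (k, m) b) = Phi σ y g' := by
      rw [Phi_single]
      rw [← mul_assoc, ← mul_assoc, R2]
      match k with
      | 0 =>
        refine ⟨single (0, m + 1) (σ.symm b), ?_⟩
        rw [Phi_single, pow_zero, mul_one]
        simp only [mul_assoc]
        rw [← pow_succ' (Dow σ y) m]
        norm_num
      | Nat.succ k' =>
        refine ⟨single (k'+1, m+1) (σ.symm b) + single (k', m) (σ.symm b * cc σ y (k'+1)), ?_⟩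
        rw [mul_assoc (Iot (σ.symm b)), DTpow σ y k', map_add, Phi_single, Phi_single]
        rw [mul_add, add_mul]
        congr 1
        · simp only [mul_assoc]
          rw [← pow_succ' (Dow σ y) m]
        · simp only [mul_assoc]
          rw [← mul_assoc (Iot (σ.symm b)), ← map_mul]
    obtain ⟨g', hg'⟩ := key
    exact ⟨g' + g, by rw [map_add, mul_add, hg, hg', map_add]⟩

lemma DpowT_mem (j k : ℕ) :
    ∃ g, Dow σ y ^ j * Top σ ^ k = Phi σ y g := by
  induction j with
  | zero =>
    refine ⟨single (k, 0) 1, ?_⟩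
    rw [Phi_single]
    simp
  | succ j ih =>
    obtain ⟨g, hg⟩ := ih
    obtain ⟨g', hg'⟩ := Dmul_mem σ y g
    exact ⟨g', by rw [pow_succ' (Dow σ y) j, mul_assoc, hg, hg']⟩

lemma mono_mul_mem (l b : L) (i j k m : ℕ) :
    ∃ g, (Iot l * Top σ ^ i * Dow σ y ^ j) * (Iot b * Top σ ^ k * Dow σ y ^ m) = Phi σ y g := by
  obtain ⟨g0, hg0⟩ := DpowT_mem σ y j k
  have h : (Iot l * Top σ ^ i * Dow σ y ^ j) * (Iot b * Top σ ^ k * Dow σ y ^ m)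
      = Iot (l * (⇑σ)^[i] ((⇑σ.symm)^[j] b)) * Top σ ^ i * (Dow σ y ^ j * Top σ ^ k)
          * Dow σ y ^ m := by
    simp only [mul_assoc]
    rw [← mul_assoc (Dow σ y ^ j) (Iot b), Dpow_Iot]
    simp only [mul_assoc]
    rw [← mul_assoc (Top σ ^ i) (Iot _), Tpow_Iot]
    simp only [mul_assoc]
    rw [← mul_assoc (Iot l), ← map_mul]
  rw [h, hg0]
  exact frame_mem σ y _ i m g0

lemma single_mul_mem (a : ℕ × ℕ) (b : L) (f' : (ℕ × ℕ) →₀ L) :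
    ∃ g', Phi σ y (single a b) * Phi σ y f' = Phi σ y g' := by
  induction f' using Finsupp.induction with
  | zero => exact ⟨0, by simp⟩
  | single_add a' b' f' _ _ ih' =>
    obtain ⟨g', hg'⟩ := ih'
    rw [Phi_single] at hg' ⊢
    obtain ⟨g'', hg''⟩ := mono_mul_mem σ y b b' a.1 a.2 a'.1 a'.2
    refine ⟨g'' + g', ?_⟩
    rw [map_add, mul_add, hg', map_add, ← hg'', Phi_single]

lemma Phi_mul_mem (f f' : (ℕ × ℕ) →₀ L) :
    ∃ g, Phi σ y f * Phi σ y f' = Phi σ y g := by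
  induction f using Finsupp.induction with
  | zero => exact ⟨0, by simp⟩
  | single_add a b f _ _ ih =>
    obtain ⟨g, hg⟩ := ih
    obtain ⟨g', hg'⟩ := single_mul_mem σ y a b f'
    exact ⟨g' + g, by rw [map_add, add_mul, hg, hg', map_add]⟩

end WC

namespace WC
variable {L : Type} [Field L] (σ : L ≃+* L) (y : L)

lemma Dow_eq_sum (w : (ℕ × ℕ) →₀ L) :
    Dow σ y w = w.sum fun m b =>
      single (m.1, m.2+1) (σ.symm b) + single (m.1-1, m.2) (cc σ y m.1 * σ.symm b) := by
  rw [Dow]; erw [Finsupp.liftAddHom_apply]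
  rfl

lemma Top_eq_sum (w : (ℕ × ℕ) →₀ L) :
    Top σ w = w.sum fun m b => single (m.1+1, m.2) (σ b) := by
  rw [Top]; erw [Finsupp.liftAddHom_apply]
  rfl

lemma Dow_support_le (w : (ℕ × ℕ) →₀ L) (m' : ℕ × ℕ) (hm' : m' ∈ (Dow σ y w).support) :
    ∃ m ∈ w.support, m'.1 + m'.2 ≤ m.1 + m.2 + 1 := by
  rw [Dow_eq_sum] at hm'
  obtain ⟨m, hm, hmem⟩ := Finset.mem_biUnion.1 (Finsupp.support_sum hm')
  refine ⟨m, hm, ?_⟩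
  rcases Finset.mem_union.1 (Finsupp.support_add hmem) with h | h
  · have := Finsupp.support_single_subset h
    simp only [Finset.mem_singleton] at this
    subst this
    omega
  · have := Finsupp.support_single_subset h
    simp only [Finset.mem_singleton] at this
    subst this
    omega

lemma Top_support_le (w : (ℕ × ℕ) →₀ L) (m' : ℕ × ℕ) (hm' : m' ∈ (Top σ w).support) :
    ∃ m ∈ w.support, m'.1 + m'.2 ≤ m.1 + m.2 + 1 := by
  rw [Top_eq_sum] at hm'
  obtain ⟨m, hm, hmem⟩ := Finset.mem_biUnion.1 (Finsupp.support_sum hm')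
  have := Finsupp.support_single_subset hmem
  simp only [Finset.mem_singleton] at this
  subst this
  exact ⟨m, hm, by omega⟩

lemma Tpow_support_le (i : ℕ) (w : (ℕ × ℕ) →₀ L) (m' : ℕ × ℕ)
    (hm' : m' ∈ ((Top σ ^ i) w).support) :
    ∃ m ∈ w.support, m'.1 + m'.2 ≤ m.1 + m.2 + i := by
  induction i generalizing m' with
  | zero => exact ⟨m', by simpa using hm', by omega⟩
  | succ i ih =>
    rw [pow_succ', end_mul_apply] at hm'
    obtain ⟨m1, hm1, h1⟩ := Top_support_le σ _ m' hm'
    obtain ⟨m, hm, h2⟩ := ih m1 hm1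
    exact ⟨m, hm, by omega⟩

lemma Dpow_single_err (n k l : ℕ) (b : L) :
    ∃ w : (ℕ × ℕ) →₀ L,
      (Dow σ y ^ n) (single (k, l) b) = single (k, l + n) ((⇑σ.symm)^[n] b) + w
      ∧ ∀ m ∈ w.support, m.1 + m.2 + 2 ≤ k + l + n := by
  induction n with
  | zero => exact ⟨0, by simp, by simp⟩
  | succ n ih =>
    obtain ⟨w, hw, hsupp⟩ := ih
    refine ⟨single (k-1, l+n) (cc σ y k * σ.symm ((⇑σ.symm)^[n] b)) + Dow σ y w, ?_, ?_⟩
    · rw [pow_succ', end_mul_apply, hw, map_add, Dow_single,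
        Function.iterate_succ_apply' (⇑σ.symm) n b]
      have : l + (n + 1) = l + n + 1 := by omega
      rw [this]
      abel
    · intro m hm
      rcases Finset.mem_union.1 (Finsupp.support_add hm) with h | h
      · have hme := Finsupp.support_single_subset h
        simp only [Finset.mem_singleton] at hme
        subst hme
        have hk : cc σ y k ≠ 0 := by
          intro h0
          simp [h0] at h
        have : k ≠ 0 := by
          intro h0
          subst h0
          exact hk rfl
        simp only
        omega
      · obtain ⟨m1, hm1, h1⟩ := Dow_support_le σ y w m h
        have := hsupp m1 hm1
        omega

lemma mono_single_err (lam b : L) (i j k l : ℕ) :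
    ∃ err : (ℕ × ℕ) →₀ L,
      (Iot lam * Top σ ^ i * Dow σ y ^ j) (single (k, l) b)
        = single (k + i, l + j) (lam * (⇑σ)^[i] ((⇑σ.symm)^[j] b)) + err
      ∧ ∀ m ∈ err.support, m.1 + m.2 + 2 ≤ i + j + k + l := by
  obtain ⟨w, hw, hsupp⟩ := Dpow_single_err σ y j k l b
  refine ⟨Iot lam ((Top σ ^ i) w), ?_, ?_⟩
  · rw [mul_assoc, end_mul_apply, end_mul_apply, hw, map_add, map_add, Tpow_single, Iot_single]
  · intro m hm
    have hsub : m ∈ ((Top σ ^ i) w).support := by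
      have : Iot (L := L) lam ((Top σ ^ i) w) = lam • ((Top σ ^ i) w) := rfl
      rw [this] at hm
      exact Finsupp.support_smul hm
    obtain ⟨m1, hm1, h1⟩ := Tpow_support_le σ i _ m hsub
    have := hsupp m1 hm1
    omega

end WC

namespace WC
variable {L : Type} [Field L] (σ : L ≃+* L) (y : L)

lemma iter_ne_zero (n : ℕ) {b : L} (hb : b ≠ 0) : (⇑σ)^[n] b ≠ 0 := by
  induction n with
  | zero => exact hb
  | succ n ih =>
    rw [Function.iterate_succ_apply']
    intro h
    exact ih (by simpa using σ.injective (by simpa using h))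

lemma iter_ne_zero' (n : ℕ) {b : L} (hb : b ≠ 0) : (⇑σ.symm)^[n] b ≠ 0 := by
  induction n with
  | zero => exact hb
  | succ n ih =>
    rw [Function.iterate_succ_apply']
    intro h
    exact ih (by simpa using σ.symm.injective (by simpa using h))

lemma Phi_apply_ne_zero (f w : (ℕ × ℕ) →₀ L) (hf : f ≠ 0) (hw : w ≠ 0) :
    Phi σ y f w ≠ 0 := by
  obtain ⟨mf, hmf, hmaxf⟩ := Finset.exists_max_image f.support
    (fun m => toLex (m.1 + m.2, m.1)) (Finsupp.support_nonempty_iff.2 hf)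
  obtain ⟨mw, hmw, hmaxw⟩ := Finset.exists_max_image w.support
    (fun m => toLex (m.1 + m.2, m.1)) (Finsupp.support_nonempty_iff.2 hw)
  set pt : ℕ × ℕ := (mf.1 + mw.1, mf.2 + mw.2) with hpt
  have hexp : Phi σ y f w
      = ∑ ij ∈ f.support, ∑ kl ∈ w.support,
          (Iot (f ij) * Top σ ^ ij.1 * Dow σ y ^ ij.2) (single kl (w kl)) := by
    rw [Phi_apply, Finsupp.sum]; erw [AddMonoidHom.finset_sum_apply]
    refine Finset.sum_congr rfl fun ij _ => ?_
    conv_lhs => rw [← Finsupp.sum_single w]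
    erw [map_finsuppSum, Finsupp.sum]; rfl
  -- per-term evaluation at pt
  have key : ∀ ij ∈ f.support, ∀ kl ∈ w.support, ¬(ij = mf ∧ kl = mw) →
      ((Iot (f ij) * Top σ ^ ij.1 * Dow σ y ^ ij.2) (single kl (w kl))) pt = 0 := by
    intro ij hij kl hkl hne
    obtain ⟨err, herr, hsupp⟩ := mono_single_err σ y (f ij) (w kl) ij.1 ij.2 kl.1 kl.2
    have hf1 := hmaxf ij hij
    have hw1 := hmaxw kl hkl
    rw [Prod.Lex.le_iff] at hf1 hw1
    simp only [ofLex_toLex] at hf1 hw1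
    have herrpt : err pt = 0 := by
      rw [← Finsupp.notMem_support_iff]
      intro hmem
      have := hsupp pt hmem
      simp only [hpt] at this
      omega
    have hkl : (kl.1, kl.2) = kl := rfl
    rw [hkl] at herr
    rw [herr, Finsupp.add_apply, herrpt, add_zero]
    by_cases hix : (kl.1 + ij.1, kl.2 + ij.2) = pt
    · exfalso
      apply hne
      have h1 : kl.1 + ij.1 = mf.1 + mw.1 := congrArg Prod.fst hix
      have h2 : kl.2 + ij.2 = mf.2 + mw.2 := congrArg Prod.snd hix
      have : ij.1 = mf.1 ∧ ij.2 = mf.2 ∧ kl.1 = mw.1 ∧ kl.2 = mw.2 := by omega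
      exact ⟨Prod.ext this.1 this.2.1, Prod.ext this.2.2.1 this.2.2.2⟩
    · exact Finsupp.single_eq_of_ne (Ne.symm hix)
  have main : ((Iot (f mf) * Top σ ^ mf.1 * Dow σ y ^ mf.2) (single mw (w mw))) pt
      = f mf * (⇑σ)^[mf.1] ((⇑σ.symm)^[mf.2] (w mw)) := by
    obtain ⟨err, herr, hsupp⟩ := mono_single_err σ y (f mf) (w mw) mf.1 mf.2 mw.1 mw.2
    have hkl : (mw.1, mw.2) = mw := rfl
    rw [hkl] at herr
    have herrpt : err pt = 0 := by
      rw [← Finsupp.notMem_support_iff]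
      intro hmem
      have := hsupp pt hmem
      simp only [hpt] at this
      omega
    rw [herr, Finsupp.add_apply, herrpt, add_zero]
    have : pt = (mw.1 + mf.1, mw.2 + mf.2) := by
      simp only [hpt, Prod.mk.injEq]
      omega
    rw [this, Finsupp.single_eq_same]
  intro h0
  have : Phi σ y f w pt = 0 := by rw [h0]; rfl
  rw [hexp, Finsupp.finset_sum_apply] at this
  rw [Finset.sum_eq_single_of_mem mf hmf (fun ij hij hne => by
    rw [Finsupp.finset_sum_apply]
    exact Finset.sum_eq_zero fun kl hkl => key ij hij kl hkl (fun hc => hne hc.1))] at this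
  rw [Finsupp.finset_sum_apply] at this
  rw [Finset.sum_eq_single_of_mem mw hmw (fun kl hkl hne => key mf hmf kl hkl
    (fun hc => hne hc.2))] at this
  rw [main] at this
  have h1 : f mf ≠ 0 := Finsupp.mem_support_iff.1 hmf
  have h2 : w mw ≠ 0 := Finsupp.mem_support_iff.1 hmw
  exact h1 (by
    rcases mul_eq_zero.1 this with h | h
    · exact h
    · exact absurd h (iter_ne_zero σ mf.1 (iter_ne_zero' σ mf.2 h2)))

end WC

namespace WC
variable {L : Type} [Field L] (σ : L ≃+* L) (y : L)

noncomputable def SR : Subring (AddMonoid.End ((ℕ × ℕ) →₀ L)) where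
  carrier := Set.range (Phi σ y)
  zero_mem' := ⟨0, map_zero _⟩
  one_mem' := ⟨single (0, 0) 1, by rw [Phi_single]; simp⟩
  add_mem' := by rintro a b ⟨f, rfl⟩ ⟨g, rfl⟩; exact ⟨f + g, map_add _ _ _⟩
  neg_mem' := by rintro a ⟨f, rfl⟩; exact ⟨-f, map_neg _ _⟩
  mul_mem' := by
    rintro a b ⟨f, rfl⟩ ⟨g, rfl⟩
    obtain ⟨h, hh⟩ := Phi_mul_mem σ y f g
    exact ⟨h, hh.symm⟩

lemma Iot_mem (l : L) : Iot l ∈ SR σ y := ⟨single (0, 0) l, by rw [Phi_single]; simp⟩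
lemma Top_mem : Top σ ∈ SR σ y := ⟨single (1, 0) 1, by rw [Phi_single]; simp⟩
lemma Dow_mem : Dow σ y ∈ SR σ y := ⟨single (0, 1) 1, by rw [Phi_single]; simp⟩

end WC

set_option maxHeartbeats 1000000 in
set_option synthInstance.maxHeartbeats 200000 in
theorem weyl_carlitz_ring_exists'
    (L : Type) [Field L] (q : ℕ)
    (frob : L ≃+* L) (hfrob : ∀ l : L, frob l = l ^ q)
    (x : L) :
    ∃ (A : Type) (_ : Ring A) (iota : L →+* A) (tau d : A),
      (∀ l : L, tau * iota l = iota (l ^ q) * tau) ∧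
      (∀ l : L, d * iota l = iota (frob.symm l) * d) ∧
      d * tau - tau * d = iota (frob.symm (x ^ q - x)) ∧
      (∀ a : A, ∃! f : (ℕ × ℕ) →₀ L,
        a = f.sum fun ij l => iota l * tau ^ ij.1 * d ^ ij.2) ∧
      (∀ a b : A, a * b = 0 → a = 0 ∨ b = 0) := by
  classical
  set σ := frob with hσ
  set y := frob.symm (x ^ q - x) with hy
  set SA : Subring (AddMonoid.End ((ℕ × ℕ) →₀ L)) := WC.SR σ y with hSA
  set iota : L →+* SA :=
    (WC.Iot (L := L)).codRestrict SA.toSubsemiring (WC.Iot_mem σ y) with hiota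
  set tauA : SA := ⟨WC.Top σ, WC.Top_mem σ y⟩ with htau
  set dA : SA := ⟨WC.Dow σ y, WC.Dow_mem σ y⟩ with hd
  have coe_mul : ∀ u v : SA, ((u * v : SA) : AddMonoid.End ((ℕ × ℕ) →₀ L)) = ↑u * ↑v :=
    fun u v => rfl
  have coe_sum : ∀ g : (ℕ × ℕ) →₀ L,
      ((g.sum fun ij l => iota l * tauA ^ ij.1 * dA ^ ij.2 : SA) :
          AddMonoid.End ((ℕ × ℕ) →₀ L)) = WC.Phi σ y g := by
    intro g
    have : ((g.sum fun ij l => iota l * tauA ^ ij.1 * dA ^ ij.2 : SA) :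
        AddMonoid.End ((ℕ × ℕ) →₀ L))
        = SA.subtype (g.sum fun ij l => iota l * tauA ^ ij.1 * dA ^ ij.2) := rfl
    rw [this, map_finsuppSum SA.subtype, WC.Phi_apply]
    refine Finsupp.sum_congr fun ij _ => ?_
    rw [map_mul, map_mul, map_pow, map_pow]
    rfl
  refine ⟨SA, inferInstance, iota, tauA, dA, ?_, ?_, ?_, ?_, ?_⟩
  · intro l
    apply Subtype.ext
    show WC.Top σ * WC.Iot l = WC.Iot (l ^ q) * WC.Top σ
    rw [← hfrob]
    exact WC.R1 σ l
  · intro l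
    apply Subtype.ext
    show WC.Dow σ y * WC.Iot l = WC.Iot (σ.symm l) * WC.Dow σ y
    exact WC.R2 σ y l
  · apply Subtype.ext
    show WC.Dow σ y * WC.Top σ - WC.Top σ * WC.Dow σ y = WC.Iot y
    rw [WC.R3 σ y]
    abel
  · intro a
    obtain ⟨f, hf⟩ := a.2
    refine ⟨f, ?_, ?_⟩
    · apply Subtype.ext
      rw [coe_sum f, hf]
    · intro g hg
      apply WC.Phi_injective σ y
      rw [← coe_sum g, ← hg, hf]
  · intro a b hab
    by_contra hcon
    push_neg at hcon
    obtain ⟨ha, hb⟩ := hcon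
    obtain ⟨f, hf⟩ := a.2
    obtain ⟨g, hg⟩ := b.2
    have hfne : f ≠ 0 := fun h => ha (Subtype.ext (by rw [← hf, h, map_zero]; rfl))
    have hgne : g ≠ 0 := fun h => hb (Subtype.ext (by rw [← hg, h, map_zero]; rfl))
    have hval : WC.Phi σ y f * WC.Phi σ y g = 0 := by
      have h2 : ((a * b : SA) : AddMonoid.End ((ℕ × ℕ) →₀ L)) = 0 := by
        rw [hab]; rfl
      rw [coe_mul, ← hf, ← hg] at h2
      exact h2
    have hz : WC.Phi σ y f (WC.Phi σ y g (Finsupp.single ((0:ℕ), (0:ℕ)) (1:L))) = 0 := by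
      rw [← WC.end_mul_apply, hval]
      rfl
    rw [WC.Phi_eval_base] at hz
    exact WC.Phi_apply_ne_zero σ y f g hfne hgne hz

/-- The Weyl–Carlitz ring `A_1`: there is a ring `A` containing (via an embedding `ι`) the
field `K̄_c` (modeled by a perfect field `L` of characteristic `p`, with Frobenius
`λ ↦ λ^q` an automorphism `frob`), generated by elements `τ`, `d` subject to the
relations `dτ - τd = ι([1]^{1/q})`, `τ·ι(λ) = ι(λ^q)·τ`, `d·ι(λ) = ι(λ^{1/q})·d`
(where `[1] = x^q - x ≠ 0`), in which every element is *uniquely* a finite sum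
`Σ λ_{ij} τ^i d^j`, and which has no zero divisors. -/
theorem weyl_carlitz_ring_exists
    (L : Type) [Field L] (p : ℕ) [Fact p.Prime] [CharP L p]
    (v : ℕ) (q : ℕ) (hq : q = p ^ v)
    (frob : L ≃+* L) (hfrob : ∀ l : L, frob l = l ^ q)
    (x : L) (hx : x ^ q - x ≠ 0) :
    ∃ (A : Type) (_ : Ring A) (iota : L →+* A) (tau d : A),
      (∀ l : L, tau * iota l = iota (l ^ q) * tau) ∧
      (∀ l : L, d * iota l = iota (frob.symm l) * d) ∧
      d * tau - tau * d = iota (frob.symm (x ^ q - x)) ∧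
      (∀ a : A, ∃! f : (ℕ × ℕ) →₀ L,
        a = f.sum fun ij l => iota l * tau ^ ij.1 * d ^ ij.2) ∧
      (∀ a b : A, a * b = 0 → a = 0 ∨ b = 0) := by
  exact weyl_carlitz_ring_exists' L q frob hfrob x
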